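/- Additivity of the tumula information (Theorem 2(b)): Let A₁, B₁, A₂, B₂ be nonempty finite types, ρ a bipartite state on A₁ × B₁, and ρ' a bipartite state on A₂ × B₂. Let Π denote the state on (A₁ × A₂) × (B₁ × B₂) obtained from the Kronecker product ρ ⊗ ρ' (a matrix indexed by (A₁ × B₁) × (A₂ × B₂)) by reindexing along the bijection (A₁ × A₂) × (B₁ × B₂) ≃ (A₁ × B₁) × (A₂ × B₂). Then the infimum over states σ on A₁ × A₂ and τ on B₁ × B₂ of D(σ ⊗ τ ‖ Π) equals T(A₁:B₁)_ρ + T(A₂:B₂)_{ρ'}, as an equality in [0,+∞]. -/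

import Mathlib

set_option linter.unusedSectionVars false
set_option maxHeartbeats 1000000


open scoped BigOperators Kronecker ComplexOrder

noncomputable section

/-- Matrix power on the support via spectral decomposition (convention `0 ^ p = 0`);
junk value `0` for non-Hermitian matrices. -/
noncomputable def mpow {A : Type*} [Fintype A] [DecidableEq A] (X : Matrix A A ℂ) (p : ℝ) :
    Matrix A A ℂ :=
  if h : X.IsHermitian then
    (h.eigenvectorUnitary : Matrix A A ℂ) *
      Matrix.diagonal (fun i =>
        ((if h.eigenvalues i = 0 then (0 : ℝ) else (h.eigenvalues i) ^ p : ℝ) : ℂ)) *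
      (star (h.eigenvectorUnitary : Matrix A A ℂ))
  else 0

/-- Matrix logarithm via spectral decomposition (`Real.log 0 = 0`); junk value `0`
for non-Hermitian matrices. -/
noncomputable def mlog {A : Type*} [Fintype A] [DecidableEq A] (X : Matrix A A ℂ) :
    Matrix A A ℂ :=
  if h : X.IsHermitian then
    (h.eigenvectorUnitary : Matrix A A ℂ) *
      Matrix.diagonal (fun i => ((Real.log (h.eigenvalues i) : ℝ) : ℂ)) *
      (star (h.eigenvectorUnitary : Matrix A A ℂ))
  else 0

/-- A quantum state: a positive semidefinite matrix with unit trace. -/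
structure MState (A : Type*) [Fintype A] [DecidableEq A] where
  mat : Matrix A A ℂ
  posSemidef : mat.PosSemidef
  trace_one : mat.trace = 1

/-- `Q_α(ρ‖σ) = Tr[ρ^α σ^(1-α)]`. -/
noncomputable def QRenyi {A : Type*} [Fintype A] [DecidableEq A] (α : ℝ)
    (ρ σ : Matrix A A ℂ) : ℝ :=
  ((mpow ρ α * mpow σ (1 - α)).trace).re

/-- Petz Rényi divergence `D_α(ρ‖σ)`, valued in `(-∞,∞]`. -/
noncomputable def DRenyi {A : Type*} [Fintype A] [DecidableEq A] (α : ℝ)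
    (ρ σ : Matrix A A ℂ) : EReal :=
  if QRenyi α ρ σ = 0 then ⊤ else (((α - 1)⁻¹ * Real.log (QRenyi α ρ σ) : ℝ) : EReal)

-- Quantum relative entropy `D(ρ‖σ)`, valued in `(-∞,∞]`.
open Classical in
noncomputable def relEnt {A : Type*} [Fintype A] [DecidableEq A] (ρ σ : Matrix A A ℂ) : EReal :=
  if LinearMap.ker (Matrix.toLin' σ) ≤ LinearMap.ker (Matrix.toLin' ρ) then
    (((ρ * (mlog ρ - mlog σ)).trace).re : EReal)
  else ⊤

/-- Doubly minimized Petz Rényi lautum information. -/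
noncomputable def Ldd {A B : Type*} [Fintype A] [DecidableEq A] [Fintype B] [DecidableEq B]
    (α : ℝ) (ρ : Matrix (A × B) (A × B) ℂ) : EReal :=
  ⨅ (σ : MState A) (τ : MState B), DRenyi α (σ.mat ⊗ₖ τ.mat) ρ

/-- Tumula information. -/
noncomputable def Tum {A B : Type*} [Fintype A] [DecidableEq A] [Fintype B] [DecidableEq B]
    (ρ : Matrix (A × B) (A × B) ℂ) : EReal :=
  ⨅ (σ : MState A) (τ : MState B), relEnt (σ.mat ⊗ₖ τ.mat) ρ

/-- Partial trace over the first factor. -/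
noncomputable def ptrA {A B : Type*} [Fintype A] (M : Matrix (A × B) (A × B) ℂ) :
    Matrix B B ℂ :=
  Matrix.of fun b b' => ∑ a, M (a, b) (a, b')

/-- Partial trace over the second factor. -/
noncomputable def ptrB {A B : Type*} [Fintype B] (M : Matrix (A × B) (A × B) ℂ) :
    Matrix A A ℂ :=
  Matrix.of fun a a' => ∑ b, M (a, b) (a', b)


namespace TumProof

open Matrix Polynomial

variable {n m : Type*} [Fintype n] [DecidableEq n] [Fintype m] [DecidableEq m]

/-- Conjugation by a unitary as an ℝ-algebra hom. -/
def conjAlgHom (U : Matrix n n ℂ) (h1 : U * Uᴴ = 1) (h2 : Uᴴ * U = 1) :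
    Matrix n n ℂ →ₐ[ℝ] Matrix n n ℂ where
  toFun M := U * M * Uᴴ
  map_one' := by show U * 1 * Uᴴ = 1; rw [mul_one, h1]
  map_mul' M N := by
    have key : ∀ X : Matrix n n ℂ, Uᴴ * (U * X) = X := fun X => by
      rw [← mul_assoc, h2, one_mul]
    simp only [mul_assoc, key]
  map_zero' := by simp
  map_add' M N := by
    simp [Matrix.add_mul, Matrix.mul_add]
  commutes' r := by
    simp only [Algebra.algebraMap_eq_smul_one]
    rw [Matrix.mul_smul, mul_one, Matrix.smul_mul, h1]

lemma aeval_conj_diag (U : Matrix n n ℂ) (h1 : U * Uᴴ = 1) (h2 : Uᴴ * U = 1)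
    (c : n → ℝ) (p : ℝ[X]) :
    Polynomial.aeval (U * Matrix.diagonal (fun i => (c i : ℂ)) * Uᴴ) p =
      U * Matrix.diagonal (fun i => ((p.eval (c i) : ℝ) : ℂ)) * Uᴴ := by
  have hφ : U * Matrix.diagonal (fun i => (c i : ℂ)) * Uᴴ =
      (conjAlgHom U h1 h2) ((Matrix.diagonalAlgHom (R := ℝ)) (fun i => (c i : ℂ))) := rfl
  rw [hφ, Polynomial.aeval_algHom_apply, Polynomial.aeval_algHom_apply]
  have : (Polynomial.aeval (fun i => (c i : ℂ))) p
      = fun i => ((p.eval (c i) : ℝ) : ℂ) := by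
    funext i
    have h0 := Polynomial.aeval_algHom_apply (Pi.evalAlgHom ℝ (fun _ : n => ℂ) i)
      (fun k => (c k : ℂ)) p
    rw [show ((Polynomial.aeval (fun i => (c i : ℂ))) p) i
        = (Pi.evalAlgHom ℝ (fun _ : n => ℂ) i) ((Polynomial.aeval fun k => (c k : ℂ)) p) from rfl,
      ← h0]
    show Polynomial.aeval ((c i : ℂ)) p = _
    rw [← Complex.coe_algebraMap]
    rw [Polynomial.aeval_algebraMap_apply_eq_algebraMap_eval]
  rw [this]
  rfl

lemma exists_interp (s : Finset ℝ) : ∃ p : ℝ[X], ∀ x ∈ s, p.eval x = Real.log x := by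
  refine ⟨Lagrange.interpolate s id Real.log, fun x hx => ?_⟩
  have := Lagrange.eval_interpolate_at_node (v := id) (r := Real.log)
    (Set.injOn_id _) hx
  simpa using this

/-- The cornerstone: `mlog` of a unitary conjugation of a real diagonal. -/
lemma mlog_conj (U : Matrix n n ℂ) (h1 : U * Uᴴ = 1) (h2 : Uᴴ * U = 1) (d : n → ℝ) :
    mlog (U * Matrix.diagonal (fun i => (d i : ℂ)) * Uᴴ) =
      U * Matrix.diagonal (fun i => ((Real.log (d i) : ℝ) : ℂ)) * Uᴴ := by
  set X := U * Matrix.diagonal (fun i => (d i : ℂ)) * Uᴴ with hXdef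
  have hX : X.IsHermitian := by
    have : Xᴴ = X := by
      rw [hXdef]
      rw [Matrix.conjTranspose_mul, Matrix.conjTranspose_mul,
        Matrix.conjTranspose_conjTranspose, Matrix.diagonal_conjTranspose]
      have : star (fun i => (d i : ℂ)) = fun i => (d i : ℂ) := by
        funext i; simp [Complex.conj_ofReal]
      rw [this, mul_assoc]
    exact this
  set V : Matrix n n ℂ := (hX.eigenvectorUnitary : Matrix n n ℂ) with hVdef
  have hVmem := hX.eigenvectorUnitary.2
  have hV1 : V * Vᴴ = 1 := by
    simpa [hVdef, Matrix.star_eq_conjTranspose] using hVmem.2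
  have hV2 : Vᴴ * V = 1 := by
    simpa [hVdef, Matrix.star_eq_conjTranspose] using hVmem.1
  have hspec : X = V * Matrix.diagonal (fun i => ((hX.eigenvalues i : ℝ) : ℂ)) * Vᴴ := by
    have := hX.spectral_theorem
    simpa [hVdef, Matrix.star_eq_conjTranspose, Function.comp_def] using this
  obtain ⟨p, hp⟩ := exists_interp ((Finset.univ.image d) ∪ (Finset.univ.image hX.eigenvalues))
  have e1 : Polynomial.aeval X p = U * Matrix.diagonal
      (fun i => ((Real.log (d i) : ℝ) : ℂ)) * Uᴴ := by
    rw [hXdef, aeval_conj_diag U h1 h2 d p]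
    have hfun : (fun i => ((p.eval (d i) : ℝ) : ℂ)) = fun i => ((Real.log (d i) : ℝ) : ℂ) := by
      funext i
      rw [hp (d i) (Finset.mem_union_left _ (Finset.mem_image_of_mem d (Finset.mem_univ i)))]
    rw [hfun]
  have e2 : Polynomial.aeval X p = V * Matrix.diagonal
      (fun i => ((Real.log (hX.eigenvalues i) : ℝ) : ℂ)) * Vᴴ := by
    conv_lhs => rw [hspec]
    rw [aeval_conj_diag V hV1 hV2 hX.eigenvalues p]
    have hfun : (fun i => ((p.eval (hX.eigenvalues i) : ℝ) : ℂ))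
        = fun i => ((Real.log (hX.eigenvalues i) : ℝ) : ℂ) := by
      funext i
      rw [hp (hX.eigenvalues i)
        (Finset.mem_union_right _ (Finset.mem_image_of_mem _ (Finset.mem_univ i)))]
    rw [hfun]
  have : mlog X = V * Matrix.diagonal
      (fun i => ((Real.log (hX.eigenvalues i) : ℝ) : ℂ)) * Vᴴ := by
    rw [mlog, dif_pos hX]
    rfl
  rw [this, ← e2, e1]

end TumProof

namespace TumProof
open Matrix

variable {n m A B : Type*} [Fintype n] [DecidableEq n] [Fintype m] [DecidableEq m]
  [Fintype A] [DecidableEq A] [Fintype B] [DecidableEq B]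

def vkron (x : A → ℂ) (y : B → ℂ) : A × B → ℂ := fun p => x p.1 * y p.2

def colv (M : Matrix n m ℂ) (j : m) : n → ℂ := fun i => M i j

lemma vkron_zero_left (y : B → ℂ) : vkron (0 : A → ℂ) y = 0 := by
  funext p; simp [vkron]

lemma vkron_zero_right (x : A → ℂ) : vkron x (0 : B → ℂ) = 0 := by
  funext p; simp [vkron]

lemma vkron_smul_left (c : ℂ) (x : A → ℂ) (y : B → ℂ) :
    vkron (c • x) y = c • vkron x y := by
  funext p; simp [vkron, mul_assoc]

lemma vkron_smul_right (c : ℂ) (x : A → ℂ) (y : B → ℂ) :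
    vkron x (c • y) = c • vkron x y := by
  funext p; simp [vkron]; ring

lemma kron_mulVec (M : Matrix A A ℂ) (N : Matrix B B ℂ) (x : A → ℂ) (y : B → ℂ) :
    (M ⊗ₖ N) *ᵥ vkron x y = vkron (M *ᵥ x) (N *ᵥ y) := by
  funext ⟨a, b⟩
  simp only [Matrix.mulVec, dotProduct, vkron, Matrix.kroneckerMap_apply,
    Fintype.sum_prod_type]
  rw [Finset.sum_mul_sum]
  apply Finset.sum_congr rfl; intro a' _
  apply Finset.sum_congr rfl; intro b' _
  ring

lemma kron_conjT (M : Matrix A A ℂ) (N : Matrix B B ℂ) : (M ⊗ₖ N)ᴴ = Mᴴ ⊗ₖ Nᴴ := by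
  ext ⟨a, b⟩ ⟨c, d⟩
  simp [Matrix.conjTranspose_apply, Matrix.kroneckerMap_apply]

lemma colv_kron (M : Matrix A A ℂ) (N : Matrix B B ℂ) (i : A) (j : B) :
    colv (M ⊗ₖ N) (i, j) = vkron (colv M i) (colv N j) := rfl

lemma dot_col_unit (U : Matrix n n ℂ) (h2 : Uᴴ * U = 1) (j : n) :
    star (colv U j) ⬝ᵥ colv U j = 1 := by
  have h := congrFun (congrFun h2 j) j
  simpa [Matrix.mul_apply, Matrix.conjTranspose_apply, Matrix.one_apply, dotProduct,
    colv, Pi.star_apply] using h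

lemma trace_mul_conj_diag (M U : Matrix n n ℂ) (d : n → ℂ) :
    (M * (U * Matrix.diagonal d * Uᴴ)).trace
      = ∑ j, d j * (star (colv U j) ⬝ᵥ (M *ᵥ colv U j)) := by
  have h1 : M * (U * Matrix.diagonal d * Uᴴ) = M * U * Matrix.diagonal d * Uᴴ := by
    simp only [Matrix.mul_assoc]
  rw [h1, Matrix.trace_mul_cycle]
  simp only [Matrix.trace, Matrix.diag_apply, Matrix.mul_diagonal]
  apply Finset.sum_congr rfl; intro j _
  rw [mul_comm]
  congr 1

lemma dot_conj_diag (U : Matrix n n ℂ) (d : n → ℂ) (x : n → ℂ) :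
    star x ⬝ᵥ ((U * Matrix.diagonal d * Uᴴ) *ᵥ x)
      = ∑ i, d i * (star ((Uᴴ *ᵥ x) i) * (Uᴴ *ᵥ x) i) := by
  have h1 : (U * Matrix.diagonal d * Uᴴ) *ᵥ x = U *ᵥ (Matrix.diagonal d *ᵥ (Uᴴ *ᵥ x)) := by
    simp only [Matrix.mulVec_mulVec, Matrix.mul_assoc]
  rw [h1, dotProduct_mulVec]
  have h2 : star x ᵥ* U = star (Uᴴ *ᵥ x) := by
    rw [Matrix.star_mulVec, Matrix.conjTranspose_conjTranspose]
  rw [h2]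
  simp only [dotProduct, Matrix.mulVec_diagonal, Pi.star_apply]
  apply Finset.sum_congr rfl; intro i _
  ring

section Spectral

variable {M : Matrix n n ℂ}

lemma eigU_mul_star (h : M.IsHermitian) :
    (h.eigenvectorUnitary : Matrix n n ℂ) * (h.eigenvectorUnitary : Matrix n n ℂ)ᴴ = 1 := by
  simpa [Matrix.star_eq_conjTranspose] using h.eigenvectorUnitary.2.2

lemma eigU_star_mul (h : M.IsHermitian) :
    (h.eigenvectorUnitary : Matrix n n ℂ)ᴴ * (h.eigenvectorUnitary : Matrix n n ℂ) = 1 := by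
  simpa [Matrix.star_eq_conjTranspose] using h.eigenvectorUnitary.2.1

lemma spec_eq (h : M.IsHermitian) :
    M = (h.eigenvectorUnitary : Matrix n n ℂ) *
      Matrix.diagonal (fun i => ((h.eigenvalues i : ℝ) : ℂ)) *
      (h.eigenvectorUnitary : Matrix n n ℂ)ᴴ := by
  have := h.spectral_theorem
  simpa [Matrix.star_eq_conjTranspose, Function.comp_def] using this

lemma mlog_eq (h : M.IsHermitian) :
    mlog M = (h.eigenvectorUnitary : Matrix n n ℂ) *
      Matrix.diagonal (fun i => ((Real.log (h.eigenvalues i) : ℝ) : ℂ)) *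
      (h.eigenvectorUnitary : Matrix n n ℂ)ᴴ := by
  rw [mlog, dif_pos h]
  rfl

lemma mulVec_colv_eig (h : M.IsHermitian) (i : n) :
    M *ᵥ colv (h.eigenvectorUnitary : Matrix n n ℂ) i
      = ((h.eigenvalues i : ℝ) : ℂ) • colv (h.eigenvectorUnitary : Matrix n n ℂ) i := by
  have hb : colv (h.eigenvectorUnitary : Matrix n n ℂ) i = ⇑(h.eigenvectorBasis i) := by
    funext a; exact h.eigenvectorUnitary_apply a i
  rw [hb]
  have := h.mulVec_eigenvectorBasis i
  rw [this]
  funext a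
  simp [Complex.real_smul]

lemma trace_eq_sum_eigen (h : M.IsHermitian) :
    M.trace = ∑ i, ((h.eigenvalues i : ℝ) : ℂ) := by
  conv_lhs => rw [spec_eq h]
  rw [Matrix.trace_mul_cycle, eigU_star_mul h, Matrix.one_mul, Matrix.trace_diagonal]

end Spectral

lemma kron_unit_mul_star {U : Matrix A A ℂ} {V : Matrix B B ℂ}
    (hU : U * Uᴴ = 1) (hV : V * Vᴴ = 1) : (U ⊗ₖ V) * (U ⊗ₖ V)ᴴ = 1 := by
  rw [kron_conjT, ← Matrix.mul_kronecker_mul, hU, hV, Matrix.one_kronecker_one]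

lemma kron_unit_star_mul {U : Matrix A A ℂ} {V : Matrix B B ℂ}
    (hU : Uᴴ * U = 1) (hV : Vᴴ * V = 1) : (U ⊗ₖ V)ᴴ * (U ⊗ₖ V) = 1 := by
  rw [kron_conjT, ← Matrix.mul_kronecker_mul, hU, hV, Matrix.one_kronecker_one]

lemma kron_spec {M : Matrix A A ℂ} {N : Matrix B B ℂ}
    (hM : M.IsHermitian) (hN : N.IsHermitian) :
    M ⊗ₖ N = ((hM.eigenvectorUnitary : Matrix A A ℂ) ⊗ₖ (hN.eigenvectorUnitary : Matrix B B ℂ))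
      * Matrix.diagonal (fun ij : A × B =>
          ((hM.eigenvalues ij.1 * hN.eigenvalues ij.2 : ℝ) : ℂ))
      * ((hM.eigenvectorUnitary : Matrix A A ℂ) ⊗ₖ (hN.eigenvectorUnitary : Matrix B B ℂ))ᴴ := by
  conv_lhs => rw [spec_eq hM, spec_eq hN]
  rw [Matrix.mul_kronecker_mul, Matrix.mul_kronecker_mul, Matrix.diagonal_kronecker_diagonal,
    kron_conjT]
  congr 2
  funext ij
  push_cast
  ring

lemma posSemidef_kron {M : Matrix A A ℂ} {N : Matrix B B ℂ}
    (hM : M.PosSemidef) (hN : N.PosSemidef) : (M ⊗ₖ N).PosSemidef := by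
  rw [kron_spec hM.1 hN.1]
  refine (Matrix.posSemidef_diagonal_iff.mpr ?_).mul_mul_conjTranspose_same _
  intro ij
  exact_mod_cast Complex.zero_le_real.mpr
    (mul_nonneg (hM.eigenvalues_nonneg _) (hN.eigenvalues_nonneg _))

end TumProof


namespace TumProof
open Matrix

variable {n m A B : Type*} [Fintype n] [DecidableEq n] [Fintype m] [DecidableEq m]
  [Fintype A] [DecidableEq A] [Fintype B] [DecidableEq B]

lemma dot_expand (ω : Matrix n n ℂ) (v : n → ℂ) :
    star v ⬝ᵥ ω *ᵥ v = ∑ p, ∑ q, star (v p) * (ω p q * v q) := by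
  simp only [dotProduct, Matrix.mulVec, Pi.star_apply, Finset.mul_sum]

lemma one_entry_sum (V : Matrix B B ℂ) (hV : V * Vᴴ = 1) (b b' : B) :
    ∑ j, star (V b j) * V b' j = if b' = b then 1 else 0 := by
  have h := congrFun (congrFun hV b') b
  simp only [Matrix.mul_apply, Matrix.conjTranspose_apply, Matrix.one_apply] at h
  rw [← h]
  apply Finset.sum_congr rfl; intro j _; ring

lemma sum_vkron_dot (ω : Matrix (A × B) (A × B) ℂ) (V : Matrix B B ℂ) (hV : V * Vᴴ = 1)
    (u : A → ℂ) :
    ∑ j, star (vkron u (colv V j)) ⬝ᵥ ω *ᵥ (vkron u (colv V j))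
      = star u ⬝ᵥ (ptrB ω) *ᵥ u := by
  simp only [dot_expand]
  rw [Finset.sum_comm]
  have step : ∀ p : A × B,
      (∑ j, ∑ q, star ((vkron u (colv V j)) p) * (ω p q * (vkron u (colv V j)) q))
      = ∑ a', star (u p.1) * (ω p (a', p.2) * u a') := by
    intro p
    rw [Finset.sum_comm]
    have hq : ∀ q : A × B,
        (∑ j, star ((vkron u (colv V j)) p) * (ω p q * (vkron u (colv V j)) q))
        = (star (u p.1) * (ω p q * u q.1)) * (if q.2 = p.2 then 1 else 0) := by
      intro q
      have hterm : ∀ j, star ((vkron u (colv V j)) p) * (ω p q * (vkron u (colv V j)) q)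
          = (star (u p.1) * (ω p q * u q.1)) * (star (V p.2 j) * V q.2 j) := by
        intro j; simp only [vkron, colv, star_mul', Pi.star_apply]; ring
      rw [Finset.sum_congr rfl (fun j _ => hterm j), ← Finset.mul_sum,
        one_entry_sum V hV p.2 q.2]
    rw [Finset.sum_congr rfl (fun q _ => hq q), Fintype.sum_prod_type]
    apply Finset.sum_congr rfl; intro a' _
    simp only [mul_ite, mul_one, mul_zero, Finset.sum_ite_eq', Finset.mem_univ, if_true]
  rw [Finset.sum_congr rfl (fun p _ => step p)]
  rw [Fintype.sum_prod_type]
  simp only [dotProduct, Matrix.mulVec, Pi.star_apply, ptrB, Matrix.of_apply,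
    Finset.mul_sum, Finset.sum_mul]
  exact Finset.sum_congr rfl fun a _ => Finset.sum_comm

lemma sum_vkron_dot' (ω : Matrix (A × B) (A × B) ℂ) (U : Matrix A A ℂ) (hU : U * Uᴴ = 1)
    (w : B → ℂ) :
    ∑ i, star (vkron (colv U i) w) ⬝ᵥ ω *ᵥ (vkron (colv U i) w)
      = star w ⬝ᵥ (ptrA ω) *ᵥ w := by
  simp only [dot_expand]
  rw [Finset.sum_comm]
  have step : ∀ p : A × B,
      (∑ i, ∑ q, star ((vkron (colv U i) w) p) * (ω p q * (vkron (colv U i) w) q))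
      = ∑ b', star (w p.2) * (ω p (p.1, b') * w b') := by
    intro p
    rw [Finset.sum_comm]
    have hq : ∀ q : A × B,
        (∑ i, star ((vkron (colv U i) w) p) * (ω p q * (vkron (colv U i) w) q))
        = (star (w p.2) * (ω p q * w q.2)) * (if q.1 = p.1 then 1 else 0) := by
      intro q
      have hterm : ∀ i, star ((vkron (colv U i) w) p) * (ω p q * (vkron (colv U i) w) q)
          = (star (w p.2) * (ω p q * w q.2)) * (star (U p.1 i) * U q.1 i) := by
        intro i; simp only [vkron, colv, star_mul', Pi.star_apply]; ring
      rw [Finset.sum_congr rfl (fun i _ => hterm i), ← Finset.mul_sum,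
        one_entry_sum U hU p.1 q.1]
    rw [Finset.sum_congr rfl (fun q _ => hq q), Fintype.sum_prod_type]
    rw [Finset.sum_comm]
    apply Finset.sum_congr rfl; intro b' _
    simp only [mul_ite, mul_one, mul_zero, Finset.sum_ite_eq', Finset.mem_univ, if_true]
  rw [Finset.sum_congr rfl (fun p _ => step p)]
  rw [Fintype.sum_prod_type]
  rw [Finset.sum_comm]
  simp only [dotProduct, Matrix.mulVec, Pi.star_apply, ptrA, Matrix.of_apply,
    Finset.mul_sum, Finset.sum_mul]
  exact Finset.sum_congr rfl fun b _ => Finset.sum_comm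

lemma mulVec_eq_sum_colv (M : Matrix n m ℂ) (v : m → ℂ) :
    M *ᵥ v = ∑ j, v j • colv M j := by
  funext i
  simp only [Matrix.mulVec, dotProduct, Finset.sum_apply, Pi.smul_apply, colv,
    smul_eq_mul]
  apply Finset.sum_congr rfl; intro j _; ring

lemma mulVec_finsum (T : Matrix n n ℂ) (f : m → n → ℂ) :
    T *ᵥ (∑ j, f j) = ∑ j, T *ᵥ f j := by
  funext i
  simp only [Matrix.mulVec, dotProduct, Finset.sum_apply, Finset.mul_sum]
  exact Finset.sum_comm

/-- Kernel engine: a sufficient condition for `ker (R ⊗ₖ S) ≤ ker T`. -/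
lemma ker_kron_engine {R : Matrix A A ℂ} {S : Matrix B B ℂ}
    (hR : R.IsHermitian) (hS : S.IsHermitian) (T : Matrix (A × B) (A × B) ℂ)
    (hA : ∀ (u : A → ℂ) (w : B → ℂ), R *ᵥ u = 0 → T *ᵥ vkron u w = 0)
    (hB : ∀ (u : A → ℂ) (w : B → ℂ), S *ᵥ w = 0 → T *ᵥ vkron u w = 0)
    (x : A × B → ℂ) (hx : (R ⊗ₖ S) *ᵥ x = 0) : T *ᵥ x = 0 := by
  set U := (hR.eigenvectorUnitary : Matrix A A ℂ) with hUdef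
  set V := (hS.eigenvectorUnitary : Matrix B B ℂ) with hVdef
  set W := U ⊗ₖ V with hWdef
  have hW1 : W * Wᴴ = 1 := kron_unit_mul_star (eigU_mul_star hR) (eigU_mul_star hS)
  have hW2 : Wᴴ * W = 1 := kron_unit_star_mul (eigU_star_mul hR) (eigU_star_mul hS)
  set y := Wᴴ *ᵥ x with hydef
  have hxy : x = W *ᵥ y := by
    rw [hydef, Matrix.mulVec_mulVec, hW1, Matrix.one_mulVec]
  have hRS : R ⊗ₖ S = W * Matrix.diagonal (fun ij : A × B =>
      ((hR.eigenvalues ij.1 * hS.eigenvalues ij.2 : ℝ) : ℂ)) * Wᴴ := kron_spec hR hS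
  have hdiag : Matrix.diagonal (fun ij : A × B =>
      ((hR.eigenvalues ij.1 * hS.eigenvalues ij.2 : ℝ) : ℂ)) *ᵥ y = 0 := by
    have h0 : (W * (Matrix.diagonal (fun ij : A × B =>
        ((hR.eigenvalues ij.1 * hS.eigenvalues ij.2 : ℝ) : ℂ)) * Wᴴ)) *ᵥ x = 0 := by
      rw [← Matrix.mul_assoc, ← hRS]; exact hx
    have h1 := congrArg (fun v => Wᴴ *ᵥ v) h0
    simp only [Matrix.mulVec_mulVec, Matrix.mulVec_zero] at h1
    rw [show Wᴴ * (W * (Matrix.diagonal (fun ij : A × B =>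
        ((hR.eigenvalues ij.1 * hS.eigenvalues ij.2 : ℝ) : ℂ)) * Wᴴ))
      = Matrix.diagonal (fun ij : A × B =>
        ((hR.eigenvalues ij.1 * hS.eigenvalues ij.2 : ℝ) : ℂ)) * Wᴴ from by
        rw [← Matrix.mul_assoc, hW2, Matrix.one_mul]] at h1
    rw [← Matrix.mulVec_mulVec] at h1
    exact h1
  have hcoord : ∀ ij : A × B,
      ((hR.eigenvalues ij.1 * hS.eigenvalues ij.2 : ℝ) : ℂ) * y ij = 0 := by
    intro ij
    have := congrFun hdiag ij
    simpa [Matrix.mulVec_diagonal] using this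
  rw [hxy, mulVec_eq_sum_colv W y, mulVec_finsum]
  apply Finset.sum_eq_zero
  intro ij _
  rw [Matrix.mulVec_smul]
  by_cases hy : y ij = 0
  · rw [hy]; simp
  · have hrs : (hR.eigenvalues ij.1 * hS.eigenvalues ij.2 : ℝ) = 0 := by
      have := hcoord ij
      rcases mul_eq_zero.mp this with h | h
      · exact_mod_cast h
      · exact absurd h hy
    have hcv : colv W ij = vkron (colv U ij.1) (colv V ij.2) := by
      rw [hWdef, show ij = (ij.1, ij.2) from rfl]; exact colv_kron U V ij.1 ij.2
    rcases mul_eq_zero.mp hrs with h | h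
    · have hker : R *ᵥ colv U ij.1 = 0 := by
        rw [mulVec_colv_eig hR ij.1, h]; simp
      rw [hcv, hA _ _ hker, smul_zero]
    · have hker : S *ᵥ colv V ij.2 = 0 := by
        rw [mulVec_colv_eig hS ij.2, h]; simp
      rw [hcv, hB _ _ hker, smul_zero]

lemma ker_ptrB {ω : Matrix (A × B) (A × B) ℂ} {x : A → ℂ}
    (h : ∀ b : B, ω *ᵥ vkron x (Pi.single b 1) = 0) : ptrB ω *ᵥ x = 0 := by
  funext a
  have key : ∀ b : B, ∑ a' : A, ω (a, b) (a', b) * x a' = 0 := by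
    intro b
    have := congrFun (h b) (a, b)
    simp only [Matrix.mulVec, dotProduct, vkron, Pi.zero_apply,
      Fintype.sum_prod_type] at this
    rw [← this]
    apply Finset.sum_congr rfl; intro a' _
    rw [Finset.sum_eq_single b]
    · simp
    · intro b' _ hb'; simp [Pi.single_apply, hb']
    · intro hb; exact absurd (Finset.mem_univ b) hb
  simp only [Matrix.mulVec, dotProduct, ptrB, Matrix.of_apply, Pi.zero_apply,
    Finset.sum_mul]
  rw [Finset.sum_comm]
  exact Finset.sum_eq_zero fun b _ => key b

lemma ker_ptrA {ω : Matrix (A × B) (A × B) ℂ} {x : B → ℂ}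
    (h : ∀ a : A, ω *ᵥ vkron (Pi.single a 1) x = 0) : ptrA ω *ᵥ x = 0 := by
  funext b
  have key : ∀ a : A, ∑ b' : B, ω (a, b) (a, b') * x b' = 0 := by
    intro a
    have := congrFun (h a) (a, b)
    simp only [Matrix.mulVec, dotProduct, vkron, Pi.zero_apply,
      Fintype.sum_prod_type] at this
    rw [← this]
    rw [Finset.sum_eq_single a]
    · apply Finset.sum_congr rfl; intro b' _; simp
    · intro a' _ ha'; simp [Pi.single_apply, ha']
    · intro ha; exact absurd (Finset.mem_univ a) ha
  simp only [Matrix.mulVec, dotProduct, ptrA, Matrix.of_apply, Pi.zero_apply,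
    Finset.sum_mul]
  rw [Finset.sum_comm]
  exact Finset.sum_eq_zero fun a _ => key a

lemma vkron_eq_sum_singles_right (u : A → ℂ) (w : B → ℂ) :
    vkron u w = ∑ b, w b • vkron u (Pi.single b 1) := by
  funext ⟨a, b⟩
  simp only [vkron, Finset.sum_apply, Pi.smul_apply, smul_eq_mul]
  rw [Finset.sum_eq_single b]
  · simp [mul_comm]
  · intro b' _ hb'; simp [Pi.single_apply, hb']
  · intro hb; exact absurd (Finset.mem_univ b) hb

lemma vkron_eq_sum_singles_left (u : A → ℂ) (w : B → ℂ) :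
    vkron u w = ∑ a, u a • vkron (Pi.single a 1) w := by
  funext ⟨a, b⟩
  simp only [vkron, Finset.sum_apply, Pi.smul_apply, smul_eq_mul]
  rw [Finset.sum_eq_single a]
  · simp [mul_comm]
  · intro a' _ ha'; simp [Pi.single_apply, ha']
  · intro ha; exact absurd (Finset.mem_univ a) ha

lemma colv_one (b : B) : colv (1 : Matrix B B ℂ) b = Pi.single b 1 := by
  funext i; simp [colv, Matrix.one_apply, Pi.single_apply]

/-- If the `B`-marginal quadratic form vanishes on `u`, a PSD `ω` kills `u ⊗ w`. -/
lemma psd_marg_ker_left {ω : Matrix (A × B) (A × B) ℂ} (hω : ω.PosSemidef) {u : A → ℂ}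
    (hu : ptrB ω *ᵥ u = 0) (w : B → ℂ) : ω *ᵥ vkron u w = 0 := by
  have hsum : ∑ b, star (vkron u (colv (1 : Matrix B B ℂ) b)) ⬝ᵥ ω *ᵥ
      (vkron u (colv (1 : Matrix B B ℂ) b)) = 0 := by
    rw [sum_vkron_dot ω 1 (by simp) u, hu, dotProduct_zero]
  have hnn : ∀ b : B, (0 : ℂ) ≤ star (vkron u (colv (1 : Matrix B B ℂ) b)) ⬝ᵥ ω *ᵥ
      (vkron u (colv (1 : Matrix B B ℂ) b)) := fun b => hω.dotProduct_mulVec_nonneg _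
  have hzero : ∀ b : B, ω *ᵥ vkron u (Pi.single b 1) = 0 := by
    intro b
    have h0 : star (vkron u (colv (1 : Matrix B B ℂ) b)) ⬝ᵥ ω *ᵥ
        (vkron u (colv (1 : Matrix B B ℂ) b)) = 0 :=
      (Finset.sum_eq_zero_iff_of_nonneg (fun b _ => hnn b)).mp hsum b (Finset.mem_univ b)
    have := (hω.dotProduct_mulVec_zero_iff _).mp h0
    rwa [colv_one] at this
  rw [vkron_eq_sum_singles_right, mulVec_finsum]
  apply Finset.sum_eq_zero
  intro b _
  rw [Matrix.mulVec_smul, hzero b, smul_zero]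

lemma psd_marg_ker_right {ω : Matrix (A × B) (A × B) ℂ} (hω : ω.PosSemidef) {w : B → ℂ}
    (hw : ptrA ω *ᵥ w = 0) (u : A → ℂ) : ω *ᵥ vkron u w = 0 := by
  have hsum : ∑ a, star (vkron (colv (1 : Matrix A A ℂ) a) w) ⬝ᵥ ω *ᵥ
      (vkron (colv (1 : Matrix A A ℂ) a) w) = 0 := by
    rw [sum_vkron_dot' ω 1 (by simp) w, hw, dotProduct_zero]
  have hnn : ∀ a : A, (0 : ℂ) ≤ star (vkron (colv (1 : Matrix A A ℂ) a) w) ⬝ᵥ ω *ᵥ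
      (vkron (colv (1 : Matrix A A ℂ) a) w) := fun a => hω.dotProduct_mulVec_nonneg _
  have hzero : ∀ a : A, ω *ᵥ vkron (Pi.single a 1) w = 0 := by
    intro a
    have h0 : star (vkron (colv (1 : Matrix A A ℂ) a) w) ⬝ᵥ ω *ᵥ
        (vkron (colv (1 : Matrix A A ℂ) a) w) = 0 :=
      (Finset.sum_eq_zero_iff_of_nonneg (fun a _ => hnn a)).mp hsum a (Finset.mem_univ a)
    have := (hω.dotProduct_mulVec_zero_iff _).mp h0
    rwa [colv_one] at this
  rw [vkron_eq_sum_singles_left, mulVec_finsum]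
  apply Finset.sum_eq_zero
  intro a _
  rw [Matrix.mulVec_smul, hzero a, smul_zero]

end TumProof

namespace TumProof
open Matrix

variable {n m A B : Type*} [Fintype n] [DecidableEq n] [Fintype m] [DecidableEq m]
  [Fintype A] [DecidableEq A] [Fintype B] [DecidableEq B]

lemma mulVec_colv (M : Matrix n m ℂ) (N : Matrix m m ℂ) (j : m) :
    M *ᵥ colv N j = colv (M * N) j := by
  funext i
  simp [Matrix.mulVec, colv, Matrix.mul_apply, dotProduct]

/-- Splitting `Tr[ω · mlog (P ⊗ₖ Q)]` into marginals, under the kernel condition. -/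
lemma trace_mul_mlog_kron {P : Matrix A A ℂ} {Q : Matrix B B ℂ}
    (hP : P.IsHermitian) (hQ : Q.IsHermitian) (ω : Matrix (A × B) (A × B) ℂ)
    (hker : ∀ x : A × B → ℂ, (P ⊗ₖ Q) *ᵥ x = 0 → ω *ᵥ x = 0) :
    (ω * mlog (P ⊗ₖ Q)).trace = (ptrB ω * mlog P).trace + (ptrA ω * mlog Q).trace := by
  set U := (hP.eigenvectorUnitary : Matrix A A ℂ) with hUdef
  set V := (hQ.eigenvectorUnitary : Matrix B B ℂ) with hVdef
  set r := hP.eigenvalues with hrdef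
  set s := hQ.eigenvalues with hsdef
  have hW1 : (U ⊗ₖ V) * (U ⊗ₖ V)ᴴ = 1 :=
    kron_unit_mul_star (eigU_mul_star hP) (eigU_mul_star hQ)
  have hW2 : (U ⊗ₖ V)ᴴ * (U ⊗ₖ V) = 1 :=
    kron_unit_star_mul (eigU_star_mul hP) (eigU_star_mul hQ)
  have hmlog : mlog (P ⊗ₖ Q) = (U ⊗ₖ V) * Matrix.diagonal
      (fun ij : A × B => ((Real.log (r ij.1 * s ij.2) : ℝ) : ℂ)) * (U ⊗ₖ V)ᴴ := by
    rw [kron_spec hP hQ]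
    exact mlog_conj _ hW1 hW2 _
  rw [hmlog, trace_mul_conj_diag]
  have hq0 : ∀ ij : A × B, r ij.1 * s ij.2 = 0 →
      star (colv (U ⊗ₖ V) ij) ⬝ᵥ ω *ᵥ colv (U ⊗ₖ V) ij = 0 := by
    intro ij h0
    have hcv : colv (U ⊗ₖ V) ij = vkron (colv U ij.1) (colv V ij.2) := by
      rw [show ij = (ij.1, ij.2) from rfl]; exact colv_kron U V ij.1 ij.2
    have hkv : (P ⊗ₖ Q) *ᵥ colv (U ⊗ₖ V) ij = 0 := by
      rw [hcv, kron_mulVec, mulVec_colv_eig hP, mulVec_colv_eig hQ, vkron_smul_left,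
        vkron_smul_right, smul_smul]
      rw [show ((r ij.1 : ℝ) : ℂ) * ((s ij.2 : ℝ) : ℂ) = ((r ij.1 * s ij.2 : ℝ) : ℂ) from by
        push_cast; ring, h0]
      simp
    rw [hker _ hkv, dotProduct_zero]
  have hsplit : ∀ ij : A × B,
      ((Real.log (r ij.1 * s ij.2) : ℝ) : ℂ) * (star (colv (U ⊗ₖ V) ij) ⬝ᵥ ω *ᵥ colv (U ⊗ₖ V) ij)
      = ((Real.log (r ij.1) : ℝ) : ℂ) * (star (colv (U ⊗ₖ V) ij) ⬝ᵥ ω *ᵥ colv (U ⊗ₖ V) ij)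
        + ((Real.log (s ij.2) : ℝ) : ℂ) *
          (star (colv (U ⊗ₖ V) ij) ⬝ᵥ ω *ᵥ colv (U ⊗ₖ V) ij) := by
    intro ij
    by_cases h0 : r ij.1 * s ij.2 = 0
    · rw [hq0 ij h0]; ring
    · rw [Real.log_mul (fun h => h0 (by rw [h, zero_mul])) (fun h => h0 (by rw [h, mul_zero]))]
      push_cast; ring
  rw [Finset.sum_congr rfl (fun ij _ => hsplit ij), Finset.sum_add_distrib]
  congr 1
  · rw [mlog_eq hP, trace_mul_conj_diag, Fintype.sum_prod_type]
    apply Finset.sum_congr rfl; intro i _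
    rw [← sum_vkron_dot ω V (eigU_mul_star hQ) (colv U i), Finset.mul_sum]
    exact Finset.sum_congr rfl fun j _ => by rw [colv_kron]
  · rw [mlog_eq hQ, trace_mul_conj_diag, Fintype.sum_prod_type, Finset.sum_comm]
    apply Finset.sum_congr rfl; intro j _
    rw [← sum_vkron_dot' ω U (eigU_mul_star hP) (colv V j), Finset.mul_sum]
    exact Finset.sum_congr rfl fun i _ => by rw [colv_kron]

lemma klein_term (nv r s : ℝ) (hn : 0 ≤ nv) (hr : 0 ≤ r) (hs : 0 ≤ s)
    (h0 : s = 0 → r * nv = 0) :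
    Real.log s * (r * nv) ≤ (r * Real.log r) * nv - (r * nv - s * nv) := by
  rcases eq_or_lt_of_le hn with hn0 | hnpos
  · rw [← hn0]; simp
  rcases eq_or_lt_of_le hs with hs0 | hspos
  · have hrn : r * nv = 0 := h0 hs0.symm
    have hr0 : r = 0 := by
      rcases mul_eq_zero.mp hrn with h | h
      · exact h
      · exact absurd h (ne_of_gt hnpos)
    rw [hr0, ← hs0]; simp
  rcases eq_or_lt_of_le hr with hr0 | hrpos
  · rw [← hr0]
    have : 0 ≤ s * nv := mul_nonneg hs hn
    simp; nlinarith
  have hlog : Real.log (s / r) ≤ s / r - 1 :=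
    Real.log_le_sub_one_of_pos (div_pos hspos hrpos)
  have hlogd : Real.log (s / r) = Real.log s - Real.log r :=
    Real.log_div (ne_of_gt hspos) (ne_of_gt hrpos)
  have hdiv : s / r * r = s := div_mul_cancel₀ s (ne_of_gt hrpos)
  nlinarith [mul_le_mul_of_nonneg_right (hlogd ▸ hlog) (le_of_lt (mul_pos hrpos hnpos)),
    mul_pos hrpos hnpos]

/-- Klein's inequality. -/
lemma klein {ρ σ : Matrix n n ℂ} (hρ : ρ.PosSemidef) (hσ : σ.PosSemidef)
    (hρt : ρ.trace = 1) (hσt : σ.trace = 1)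
    (hker : ∀ x, σ *ᵥ x = 0 → ρ *ᵥ x = 0) :
    ((ρ * mlog σ).trace).re ≤ ((ρ * mlog ρ).trace).re := by
  set U := (hρ.1.eigenvectorUnitary : Matrix n n ℂ) with hUdef
  set W := (hσ.1.eigenvectorUnitary : Matrix n n ℂ) with hWdef
  set r := hρ.1.eigenvalues with hrdef
  set s := hσ.1.eigenvalues with hsdef
  set C := Uᴴ * W with hCdef
  set nv : n → n → ℝ := fun i j => Complex.normSq (C i j) with hnvdef
  have hrnn : ∀ i, 0 ≤ r i := fun i => hρ.eigenvalues_nonneg i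
  have hsnn : ∀ j, 0 ≤ s j := fun j => hσ.eigenvalues_nonneg j
  have hnn : ∀ i j, 0 ≤ nv i j := fun i j => Complex.normSq_nonneg _
  -- eigenvalue sums are 1
  have hrsum : ∑ i, r i = 1 := by
    have h := trace_eq_sum_eigen hρ.1
    rw [hρt] at h
    have h2 : ((∑ i, r i : ℝ) : ℂ) = 1 := by push_cast; rw [← h]
    exact_mod_cast h2
  have hssum : ∑ j, s j = 1 := by
    have h := trace_eq_sum_eigen hσ.1
    rw [hσt] at h
    have h2 : ((∑ j, s j : ℝ) : ℂ) = 1 := by push_cast; rw [← h]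
    exact_mod_cast h2
  -- the quadratic forms
  have hq : ∀ j, star (colv W j) ⬝ᵥ ρ *ᵥ colv W j
      = ((∑ i, r i * nv i j : ℝ) : ℂ) := by
    intro j
    conv_lhs => rw [spec_eq hρ.1]
    rw [dot_conj_diag]
    have hcol : ∀ i, (Uᴴ *ᵥ colv W j) i = C i j := by
      intro i; rw [mulVec_colv]; rfl
    push_cast
    apply Finset.sum_congr rfl; intro i _
    rw [hcol i]
    rw [show star (C i j) * C i j = ((Complex.normSq (C i j) : ℝ) : ℂ) from by
      rw [Complex.normSq_eq_conj_mul_self]; rfl]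
  -- value of RHS
  have hRHSc : (ρ * mlog ρ).trace = ((∑ i, Real.log (r i) * r i : ℝ) : ℂ) := by
    rw [mlog_eq hρ.1, trace_mul_conj_diag]
    push_cast
    apply Finset.sum_congr rfl; intro i _
    rw [mulVec_colv_eig hρ.1, dotProduct_smul,
      dot_col_unit U (eigU_star_mul hρ.1), smul_eq_mul, mul_one]
  -- value of LHS
  have hLHSc : (ρ * mlog σ).trace = ((∑ j, Real.log (s j) * (∑ i, r i * nv i j) : ℝ) : ℂ) := by
    rw [mlog_eq hσ.1, trace_mul_conj_diag]
    push_cast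
    apply Finset.sum_congr rfl; intro j _
    rw [hq j]
    push_cast
    ring
  -- row and column sums of nv
  have hcolsum : ∀ j, ∑ i, nv i j = 1 := by
    intro j
    have h1 : Cᴴ * C = 1 := by
      rw [hCdef, Matrix.conjTranspose_mul, Matrix.conjTranspose_conjTranspose]
      calc Wᴴ * U * (Uᴴ * W) = Wᴴ * (U * Uᴴ) * W := by
            noncomm_ring
        _ = 1 := by rw [eigU_mul_star hρ.1, Matrix.mul_one, eigU_star_mul hσ.1]
    have h2 := congrFun (congrFun h1 j) j
    simp only [Matrix.mul_apply, Matrix.conjTranspose_apply, Matrix.one_apply_eq] at h2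
    have h3 : ((∑ i, nv i j : ℝ) : ℂ) = 1 := by
      push_cast
      rw [← h2]
      apply Finset.sum_congr rfl; intro i _
      rw [hnvdef]
      rw [show ((Complex.normSq (C i j) : ℝ) : ℂ) = star (C i j) * C i j from by
        rw [Complex.normSq_eq_conj_mul_self]; rfl]
    exact_mod_cast h3
  have hrowsum : ∀ i, ∑ j, nv i j = 1 := by
    intro i
    have h1 : C * Cᴴ = 1 := by
      rw [hCdef, Matrix.conjTranspose_mul, Matrix.conjTranspose_conjTranspose]
      calc Uᴴ * W * (Wᴴ * U) = Uᴴ * (W * Wᴴ) * U := by noncomm_ring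
        _ = 1 := by rw [eigU_mul_star hσ.1, Matrix.mul_one, eigU_star_mul hρ.1]
    have h2 := congrFun (congrFun h1 i) i
    simp only [Matrix.mul_apply, Matrix.conjTranspose_apply, Matrix.one_apply_eq] at h2
    have h3 : ((∑ j, nv i j : ℝ) : ℂ) = 1 := by
      push_cast
      rw [← h2]
      apply Finset.sum_congr rfl; intro j _
      rw [hnvdef]
      rw [show ((Complex.normSq (C i j) : ℝ) : ℂ) = C i j * star (C i j) from by
        rw [mul_comm, Complex.normSq_eq_conj_mul_self]; rfl]
    exact_mod_cast h3
  -- kernel: if s j = 0 then all r i * nv i j = 0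
  have hkill : ∀ j, s j = 0 → ∀ i, r i * nv i j = 0 := by
    intro j hsj
    have h1 : σ *ᵥ colv W j = 0 := by
      rw [mulVec_colv_eig hσ.1]
      rw [show s j = hσ.1.eigenvalues j from rfl] at hsj
      rw [hsj]; simp
    have h2 : star (colv W j) ⬝ᵥ ρ *ᵥ colv W j = 0 := by
      rw [hker _ h1, dotProduct_zero]
    rw [hq j] at h2
    have h3 : (∑ i, r i * nv i j : ℝ) = 0 := by exact_mod_cast h2
    intro i
    exact (Finset.sum_eq_zero_iff_of_nonneg
      (fun i _ => mul_nonneg (hrnn i) (hnn i j))).mp h3 i (Finset.mem_univ i)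
  -- final inequality
  rw [hRHSc, hLHSc, Complex.ofReal_re, Complex.ofReal_re]
  have step1 : ∑ j, Real.log (s j) * (∑ i, r i * nv i j)
      = ∑ j, ∑ i, Real.log (s j) * (r i * nv i j) := by
    apply Finset.sum_congr rfl; intro j _; rw [Finset.mul_sum]
  have step2 : ∑ i, Real.log (r i) * r i
      = ∑ j, ∑ i, ((r i * Real.log (r i)) * nv i j - (r i * nv i j - s j * nv i j)) := by
    rw [Finset.sum_comm]
    have e1 : ∀ i, ∑ j, ((r i * Real.log (r i)) * nv i j - (r i * nv i j - s j * nv i j))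
        = r i * Real.log (r i) - (r i - (∑ j, s j * nv i j)) := by
      intro i
      rw [Finset.sum_sub_distrib, Finset.sum_sub_distrib, ← Finset.mul_sum, ← Finset.mul_sum,
        hrowsum i, mul_one, mul_one]
    rw [Finset.sum_congr rfl fun i _ => e1 i]
    rw [Finset.sum_sub_distrib, Finset.sum_sub_distrib, hrsum]
    have e2 : ∑ i, ∑ j, s j * nv i j = 1 := by
      rw [Finset.sum_comm]
      have : ∀ j, ∑ i, s j * nv i j = s j := by
        intro j; rw [← Finset.mul_sum, hcolsum j, mul_one]
      rw [Finset.sum_congr rfl fun j _ => this j, hssum]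
    rw [e2]
    ring_nf
    apply Finset.sum_congr rfl; intro i _; ring
  rw [step1, step2]
  apply Finset.sum_le_sum
  intro j _
  apply Finset.sum_le_sum
  intro i _
  exact klein_term (nv i j) (r i) (s j) (hnn i j) (hrnn i) (hsnn j)
    (fun h => hkill j h i)

end TumProof

namespace TumProof
open Matrix

variable {n m A B : Type*} [Fintype n] [DecidableEq n] [Fintype m] [DecidableEq m]
  [Fintype A] [DecidableEq A] [Fintype B] [DecidableEq B]

lemma ptrB_kron (M : Matrix A A ℂ) (N : Matrix B B ℂ) : ptrB (M ⊗ₖ N) = N.trace • M := by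
  ext a a'
  simp only [ptrB, Matrix.of_apply, Matrix.kroneckerMap_apply, Matrix.smul_apply,
    Matrix.trace, Matrix.diag_apply, smul_eq_mul, Finset.sum_mul]
  rw [← Finset.mul_sum, mul_comm, Finset.sum_mul]

lemma ptrA_kron (M : Matrix A A ℂ) (N : Matrix B B ℂ) : ptrA (M ⊗ₖ N) = M.trace • N := by
  ext b b'
  simp only [ptrA, Matrix.of_apply, Matrix.kroneckerMap_apply, Matrix.smul_apply,
    Matrix.trace, Matrix.diag_apply, smul_eq_mul]
  rw [← Finset.sum_mul]

lemma ptrB_trace (M : Matrix (A × B) (A × B) ℂ) : (ptrB M).trace = M.trace := by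
  simp only [ptrB, Matrix.trace, Matrix.diag_apply, Matrix.of_apply, Fintype.sum_prod_type]

lemma ptrA_trace (M : Matrix (A × B) (A × B) ℂ) : (ptrA M).trace = M.trace := by
  simp only [ptrA, Matrix.trace, Matrix.diag_apply, Matrix.of_apply, Fintype.sum_prod_type]
  rw [Finset.sum_comm]

lemma ptrB_posSemidef {ω : Matrix (A × B) (A × B) ℂ} (hω : ω.PosSemidef) :
    (ptrB ω).PosSemidef := by
  refine Matrix.PosSemidef.of_dotProduct_mulVec_nonneg ?_ ?_
  · show (ptrB ω)ᴴ = ptrB ω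
    ext a a'
    simp only [Matrix.conjTranspose_apply, ptrB, Matrix.of_apply, star_sum]
    exact Finset.sum_congr rfl fun b _ => congrFun (congrFun hω.1 (a, b)) (a', b)
  · intro x
    rw [← sum_vkron_dot ω 1 (by simp) x]
    exact Finset.sum_nonneg fun b _ => hω.dotProduct_mulVec_nonneg _

lemma ptrA_posSemidef {ω : Matrix (A × B) (A × B) ℂ} (hω : ω.PosSemidef) :
    (ptrA ω).PosSemidef := by
  refine Matrix.PosSemidef.of_dotProduct_mulVec_nonneg ?_ ?_
  · show (ptrA ω)ᴴ = ptrA ω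
    ext b b'
    simp only [Matrix.conjTranspose_apply, ptrA, Matrix.of_apply, star_sum]
    exact Finset.sum_congr rfl fun a _ => congrFun (congrFun hω.1 (a, b)) (a, b')
  · intro x
    rw [← sum_vkron_dot' ω 1 (by simp) x]
    exact Finset.sum_nonneg fun a _ => hω.dotProduct_mulVec_nonneg _

section Reindex

variable (f : n ≃ m)

lemma reindex_mul (M N : Matrix n n ℂ) :
    (Matrix.reindex f f) (M * N) = (Matrix.reindex f f M) * (Matrix.reindex f f N) := by
  simp [Matrix.reindex_apply, Matrix.submatrix_mul_equiv]

lemma reindex_conjT (M : Matrix n n ℂ) :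
    ((Matrix.reindex f f) M)ᴴ = (Matrix.reindex f f) Mᴴ := by
  simp [Matrix.reindex_apply, Matrix.conjTranspose_submatrix]

lemma reindex_diagonal (d : n → ℂ) :
    (Matrix.reindex f f) (Matrix.diagonal d) = Matrix.diagonal (fun i => d (f.symm i)) := by
  ext i j
  simp only [Matrix.reindex_apply, Matrix.submatrix_apply, Matrix.diagonal_apply,
    EmbeddingLike.apply_eq_iff_eq]

lemma reindex_one : (Matrix.reindex f f) (1 : Matrix n n ℂ) = 1 := by
  simp [Matrix.reindex_apply, Matrix.submatrix_one_equiv]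

lemma reindex_trace (M : Matrix n n ℂ) : ((Matrix.reindex f f) M).trace = M.trace := by
  simp only [Matrix.trace, Matrix.diag_apply, Matrix.reindex_apply, Matrix.submatrix_apply]
  exact Equiv.sum_comp f.symm (fun i => M i i)

lemma reindex_reindex_symm (M : Matrix n n ℂ) :
    (Matrix.reindex f.symm f.symm) ((Matrix.reindex f f) M) = M := by
  rw [← Matrix.reindex_symm]
  exact (Matrix.reindex f f).symm_apply_apply M

lemma reindex_symm_reindex (M : Matrix m m ℂ) :
    (Matrix.reindex f f) ((Matrix.reindex f.symm f.symm) M) = M := by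
  rw [← Matrix.reindex_symm]
  exact (Matrix.reindex f f).apply_symm_apply M

lemma mulVec_reindex (M : Matrix n n ℂ) (x : m → ℂ) :
    ((Matrix.reindex f f) M) *ᵥ x = (M *ᵥ (x ∘ f)) ∘ f.symm := by
  rw [Matrix.reindex_apply, Matrix.submatrix_mulVec_equiv]
  rfl

lemma mlog_reindex (M : Matrix n n ℂ) :
    mlog ((Matrix.reindex f f) M) = (Matrix.reindex f f) (mlog M) := by
  by_cases hM : M.IsHermitian
  · set U := (hM.eigenvectorUnitary : Matrix n n ℂ) with hUdef
    have hU1 := eigU_mul_star hM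
    have hU2 := eigU_star_mul hM
    have hU1' : (Matrix.reindex f f U) * (Matrix.reindex f f U)ᴴ = 1 := by
      rw [reindex_conjT, ← reindex_mul, hU1, reindex_one]
    have hU2' : (Matrix.reindex f f U)ᴴ * (Matrix.reindex f f U) = 1 := by
      rw [reindex_conjT, ← reindex_mul, hU2, reindex_one]
    have h1 : (Matrix.reindex f f) M = (Matrix.reindex f f U) *
        Matrix.diagonal (fun i => ((hM.eigenvalues (f.symm i) : ℝ) : ℂ)) *
        (Matrix.reindex f f U)ᴴ := by
      conv_lhs => rw [spec_eq hM]
      rw [reindex_mul, reindex_mul, reindex_diagonal, reindex_conjT]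
    rw [h1, mlog_conj _ hU1' hU2' (fun i => hM.eigenvalues (f.symm i))]
    rw [mlog_eq hM, reindex_mul, reindex_mul, reindex_diagonal, reindex_conjT]
  · have hM' : ¬ ((Matrix.reindex f f) M).IsHermitian := by
      intro h
      apply hM
      have h2 := h.submatrix f
      have : ((Matrix.reindex f f M).submatrix f f) = M := by
        simp [Matrix.reindex_apply, Matrix.submatrix_submatrix]
      rwa [this] at h2
    rw [mlog, dif_neg hM', mlog, dif_neg hM]
    simp

lemma posSemidef_reindex {M : Matrix n n ℂ} (hM : M.PosSemidef) :
    ((Matrix.reindex f f) M).PosSemidef := by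
  refine Matrix.PosSemidef.of_dotProduct_mulVec_nonneg ?_ ?_
  · show ((Matrix.reindex f f) M)ᴴ = (Matrix.reindex f f) M
    rw [reindex_conjT, hM.1]
  · intro x
    rw [mulVec_reindex]
    have heq : star x ⬝ᵥ ((M *ᵥ (x ∘ f)) ∘ f.symm) = star (x ∘ f) ⬝ᵥ (M *ᵥ (x ∘ f)) := by
      simp only [dotProduct, Function.comp_apply, Pi.star_apply]
      rw [← Equiv.sum_comp f.symm (fun k => star (x (f k)) * (M *ᵥ (x ∘ f)) k)]
      exact Finset.sum_congr rfl fun i _ => by simp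
    rw [heq]
    exact hM.dotProduct_mulVec_nonneg _

end Reindex

lemma kerCond_iff (ρ σ : Matrix n n ℂ) :
    LinearMap.ker (Matrix.toLin' σ) ≤ LinearMap.ker (Matrix.toLin' ρ)
      ↔ ∀ x, σ *ᵥ x = 0 → ρ *ᵥ x = 0 := by
  constructor
  · intro h x hx
    have hmem : x ∈ LinearMap.ker (Matrix.toLin' σ) := by
      rw [LinearMap.mem_ker, Matrix.toLin'_apply, hx]
    have := h hmem
    rwa [LinearMap.mem_ker, Matrix.toLin'_apply] at this
  · intro h x hx
    rw [LinearMap.mem_ker, Matrix.toLin'_apply] at hx ⊢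
    exact h x hx

lemma relEnt_of_ker {ρ σ : Matrix n n ℂ} (h : ∀ x, σ *ᵥ x = 0 → ρ *ᵥ x = 0) :
    relEnt ρ σ = ((((ρ * mlog ρ).trace).re - ((ρ * mlog σ).trace).re : ℝ) : EReal) := by
  rw [relEnt, if_pos ((kerCond_iff ρ σ).mpr h)]
  congr 1
  rw [Matrix.mul_sub, Matrix.trace_sub, Complex.sub_re]

lemma relEnt_of_not_ker {ρ σ : Matrix n n ℂ} (h : ¬ ∀ x, σ *ᵥ x = 0 → ρ *ᵥ x = 0) :
    relEnt ρ σ = ⊤ := by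
  rw [relEnt, if_neg (fun hc => h ((kerCond_iff ρ σ).mp hc))]

lemma relEnt_ne_bot (ρ σ : Matrix n n ℂ) : relEnt ρ σ ≠ ⊥ := by
  rw [relEnt]
  split_ifs
  · exact EReal.coe_ne_bot _
  · simp

lemma relEnt_reindex (f : n ≃ m) (M N : Matrix n n ℂ) :
    relEnt ((Matrix.reindex f f) M) ((Matrix.reindex f f) N) = relEnt M N := by
  by_cases h : ∀ x, N *ᵥ x = 0 → M *ᵥ x = 0
  · have h' : ∀ x, ((Matrix.reindex f f) N) *ᵥ x = 0 → ((Matrix.reindex f f) M) *ᵥ x = 0 := by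
      intro x hx
      rw [mulVec_reindex] at hx ⊢
      have hx' : N *ᵥ (x ∘ f) = 0 := by
        funext i
        have := congrFun hx (f i)
        simpa using this
      rw [h _ hx']
      funext i; simp
    rw [relEnt_of_ker h, relEnt_of_ker h']
    have e1 : ((Matrix.reindex f f) M * mlog ((Matrix.reindex f f) M)).trace
        = (M * mlog M).trace := by
      rw [mlog_reindex, ← reindex_mul, reindex_trace]
    have e2 : ((Matrix.reindex f f) M * mlog ((Matrix.reindex f f) N)).trace
        = (M * mlog N).trace := by
      rw [mlog_reindex, ← reindex_mul, reindex_trace]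
    rw [e1, e2]
  · have h' : ¬ ∀ x, ((Matrix.reindex f f) N) *ᵥ x = 0 → ((Matrix.reindex f f) M) *ᵥ x = 0 := by
      intro hc
      apply h
      intro x hx
      have := hc (x ∘ f.symm) (by
        rw [mulVec_reindex]
        have hcomp : (x ∘ f.symm) ∘ f = x := by funext i; simp
        rw [hcomp, hx]
        funext i; simp)
      rw [mulVec_reindex] at this
      have hcomp : (x ∘ f.symm) ∘ f = x := by funext i; simp
      rw [hcomp] at this
      funext i
      have := congrFun this (f i)
      simpa using this
    rw [relEnt_of_not_ker h, relEnt_of_not_ker h']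

lemma relEnt_nonneg {ρ σ : Matrix n n ℂ} (hρ : ρ.PosSemidef) (hσ : σ.PosSemidef)
    (hρt : ρ.trace = 1) (hσt : σ.trace = 1) : 0 ≤ relEnt ρ σ := by
  by_cases h : ∀ x, σ *ᵥ x = 0 → ρ *ᵥ x = 0
  · rw [relEnt_of_ker h]
    have := klein hρ hσ hρt hσt h
    exact_mod_cast sub_nonneg.mpr this
  · rw [relEnt_of_not_ker h]
    exact le_top

end TumProof

namespace TumProof
open Matrix

variable {n m A B : Type*} [Fintype n] [DecidableEq n] [Fintype m] [DecidableEq m]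
  [Fintype A] [DecidableEq A] [Fintype B] [DecidableEq B]

/-- Relative entropy is superadditive-compatible on Kronecker products (in fact additive
when finite). -/
lemma relEnt_kron_le {P R : Matrix A A ℂ} {Q S : Matrix B B ℂ}
    (hP : P.PosSemidef) (hQ : Q.PosSemidef) (hR : R.PosSemidef) (hS : S.PosSemidef)
    (hPt : P.trace = 1) (hQt : Q.trace = 1) :
    relEnt (P ⊗ₖ Q) (R ⊗ₖ S) ≤ relEnt P R + relEnt Q S := by
  by_cases hkR : ∀ x, R *ᵥ x = 0 → P *ᵥ x = 0
  · by_cases hkS : ∀ x, S *ᵥ x = 0 → Q *ᵥ x = 0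
    · have hker : ∀ x, (R ⊗ₖ S) *ᵥ x = 0 → (P ⊗ₖ Q) *ᵥ x = 0 := by
        intro x hx
        refine ker_kron_engine hR.1 hS.1 (P ⊗ₖ Q) ?_ ?_ x hx
        · intro u w hu; rw [kron_mulVec, hkR u hu, vkron_zero_left]
        · intro u w hw; rw [kron_mulVec, hkS w hw, vkron_zero_right]
      rw [relEnt_of_ker hker, relEnt_of_ker hkR, relEnt_of_ker hkS]
      have hself : ((P ⊗ₖ Q) * mlog (P ⊗ₖ Q)).trace
          = (P * mlog P).trace + (Q * mlog Q).trace := by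
        have h := trace_mul_mlog_kron hP.1 hQ.1 (P ⊗ₖ Q) (fun x hx => hx)
        rw [h, ptrB_kron, ptrA_kron, hPt, hQt, one_smul, one_smul]
      have hcross : ((P ⊗ₖ Q) * mlog (R ⊗ₖ S)).trace
          = (P * mlog R).trace + (Q * mlog S).trace := by
        have h := trace_mul_mlog_kron hR.1 hS.1 (P ⊗ₖ Q) hker
        rw [h, ptrB_kron, ptrA_kron, hPt, hQt, one_smul, one_smul]
      rw [hself, hcross, ← EReal.coe_add]
      apply le_of_eq
      congr 1
      simp only [Complex.add_re]
      ring
    · rw [relEnt_of_not_ker hkS, EReal.add_top_of_ne_bot (relEnt_ne_bot _ _)]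
      exact le_top
  · rw [relEnt_of_not_ker hkR, EReal.top_add_of_ne_bot (relEnt_ne_bot _ _)]
    exact le_top

/-- Subadditivity of von Neumann entropy (in trace form). -/
lemma subadd {σ : Matrix (A × B) (A × B) ℂ} (hσ : σ.PosSemidef) (hσt : σ.trace = 1) :
    ((ptrB σ * mlog (ptrB σ)).trace).re + ((ptrA σ * mlog (ptrA σ)).trace).re
      ≤ ((σ * mlog σ).trace).re := by
  have h1 := ptrB_posSemidef hσ
  have h2 := ptrA_posSemidef hσ
  have ht1 : (ptrB σ).trace = 1 := by rw [ptrB_trace, hσt]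
  have ht2 : (ptrA σ).trace = 1 := by rw [ptrA_trace, hσt]
  have hker : ∀ x, (ptrB σ ⊗ₖ ptrA σ) *ᵥ x = 0 → σ *ᵥ x = 0 := by
    intro x hx
    exact ker_kron_engine h1.1 h2.1 σ
      (fun u w hu => psd_marg_ker_left hσ hu w)
      (fun u w hw => psd_marg_ker_right hσ hw u) x hx
  have hK := klein hσ (posSemidef_kron h1 h2) hσt
    (by rw [Matrix.trace_kronecker, ht1, ht2, one_mul]) hker
  have hsplit := trace_mul_mlog_kron h1.1 h2.1 σ hker
  rw [hsplit, Complex.add_re] at hK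
  exact hK

noncomputable def uniformState (A : Type*) [Fintype A] [DecidableEq A] [Nonempty A] :
    MState A where
  mat := (((Fintype.card A : ℝ)⁻¹ : ℝ) : ℂ) • (1 : Matrix A A ℂ)
  posSemidef := by
    have h : (((Fintype.card A : ℝ)⁻¹ : ℝ) : ℂ) • (1 : Matrix A A ℂ)
        = Matrix.diagonal (fun _ => (((Fintype.card A : ℝ)⁻¹ : ℝ) : ℂ)) := by
      ext i j
      simp only [Matrix.smul_apply, Matrix.one_apply, Matrix.diagonal_apply, smul_eq_mul]
      split_ifs <;> simp
    rw [h]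
    exact Matrix.posSemidef_diagonal_iff.mpr
      (fun i => Complex.zero_le_real.mpr (by positivity))
  trace_one := by
    rw [Matrix.trace_smul, Matrix.trace_one, smul_eq_mul]
    have hc : (Fintype.card A : ℝ) ≠ 0 := by
      exact_mod_cast Fintype.card_ne_zero
    push_cast
    field_simp

instance instNonemptyMState (A : Type*) [Fintype A] [DecidableEq A] [Nonempty A] :
    Nonempty (MState A) := ⟨uniformState A⟩

/-- EReal glue: bounding against a sum of infima. -/
lemma le_iInf_add_iInf {ι κ : Type*} [Nonempty ι] [Nonempty κ] {f : ι → EReal} {g : κ → EReal}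
    (hf : ∀ i, 0 ≤ f i) (hg : ∀ k, 0 ≤ g k) {c : EReal} (h : ∀ i k, c ≤ f i + g k) :
    c ≤ (⨅ i, f i) + ⨅ k, g k := by
  have hF0 : (0 : EReal) ≤ ⨅ i, f i := le_iInf hf
  have hG0 : (0 : EReal) ≤ ⨅ k, g k := le_iInf hg
  have hFb : (⨅ i, f i) ≠ ⊥ := fun hb => by rw [hb] at hF0; simp at hF0
  have hGb : (⨅ k, g k) ≠ ⊥ := fun hb => by rw [hb] at hG0; simp at hG0
  by_cases hFt : (⨅ i, f i) = ⊤
  · rw [hFt, EReal.top_add_of_ne_bot hGb]; exact le_top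
  by_cases hGt : (⨅ k, g k) = ⊤
  · rw [hGt, EReal.add_top_of_ne_bot hFb]; exact le_top
  obtain ⟨i0, hi0⟩ := iInf_lt_iff.mp (lt_top_iff_ne_top.mpr hFt)
  obtain ⟨k0, hk0⟩ := iInf_lt_iff.mp (lt_top_iff_ne_top.mpr hGt)
  have hFr : ((((⨅ i, f i) : EReal).toReal : ℝ) : EReal) = ⨅ i, f i :=
    EReal.coe_toReal hFt hFb
  have hGr : ((((⨅ k, g k) : EReal).toReal : ℝ) : EReal) = ⨅ k, g k :=
    EReal.coe_toReal hGt hGb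
  have hcne : c ≠ ⊤ := by
    intro hc
    have hlt : f i0 + g k0 < ⊤ :=
      EReal.add_lt_top (ne_top_of_lt hi0) (ne_top_of_lt hk0)
    exact absurd (hc ▸ h i0 k0) (not_le.mpr hlt)
  induction c using EReal.rec with
  | bot => exact bot_le
  | top => exact absurd rfl hcne
  | coe rc =>
    rw [← hFr, ← hGr, ← EReal.coe_add, EReal.coe_le_coe_iff]
    apply le_of_forall_pos_le_add
    intro ε hε
    have hFlt : (⨅ i, f i) < (((((⨅ i, f i) : EReal).toReal) + ε / 2 : ℝ) : EReal) := by
      conv_lhs => rw [← hFr]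
      exact_mod_cast EReal.coe_lt_coe_iff.mpr (by linarith [half_pos hε])
    have hGlt : (⨅ k, g k) < (((((⨅ k, g k) : EReal).toReal) + ε / 2 : ℝ) : EReal) := by
      conv_lhs => rw [← hGr]
      exact_mod_cast EReal.coe_lt_coe_iff.mpr (by linarith [half_pos hε])
    obtain ⟨i1, hi1⟩ := iInf_lt_iff.mp hFlt
    obtain ⟨k1, hk1⟩ := iInf_lt_iff.mp hGlt
    have hc1 : ((rc : ℝ) : EReal) ≤ f i1 + g k1 := h i1 k1
    have hc2 : f i1 + g k1 ≤ (((((⨅ i, f i) : EReal).toReal) + ε / 2 : ℝ) : EReal)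
        + (((((⨅ k, g k) : EReal).toReal) + ε / 2 : ℝ) : EReal) :=
      add_le_add hi1.le hk1.le
    have hc3 := hc1.trans hc2
    rw [← EReal.coe_add, EReal.coe_le_coe_iff] at hc3
    linarith

end TumProof

namespace TumProof
open Matrix

section Main

variable {A₁ B₁ A₂ B₂ : Type*}
  [Fintype A₁] [DecidableEq A₁] [Fintype B₁] [DecidableEq B₁]
  [Fintype A₂] [DecidableEq A₂] [Fintype B₂] [DecidableEq B₂]

lemma reindex_symm_kron_kron (σ₁ : Matrix A₁ A₁ ℂ) (σ₂ : Matrix A₂ A₂ ℂ)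
    (τ₁ : Matrix B₁ B₁ ℂ) (τ₂ : Matrix B₂ B₂ ℂ) :
    (Matrix.reindex (Equiv.prodProdProdComm A₁ B₁ A₂ B₂).symm
      (Equiv.prodProdProdComm A₁ B₁ A₂ B₂).symm) ((σ₁ ⊗ₖ σ₂) ⊗ₖ (τ₁ ⊗ₖ τ₂))
    = (σ₁ ⊗ₖ τ₁) ⊗ₖ (σ₂ ⊗ₖ τ₂) := by
  ext ⟨⟨a₁, b₁⟩, a₂, b₂⟩ ⟨⟨a₁', b₁'⟩, a₂', b₂'⟩
  simp only [Matrix.reindex_apply, Matrix.submatrix_apply, Matrix.kroneckerMap_apply,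
    Equiv.symm_symm, Equiv.prodProdProdComm_apply]
  ring

lemma ptrB_reindex_kron (σ : Matrix (A₁ × A₂) (A₁ × A₂) ℂ) (τ : Matrix (B₁ × B₂) (B₁ × B₂) ℂ) :
    ptrB ((Matrix.reindex (Equiv.prodProdProdComm A₁ B₁ A₂ B₂).symm
      (Equiv.prodProdProdComm A₁ B₁ A₂ B₂).symm) (σ ⊗ₖ τ))
    = ptrB σ ⊗ₖ ptrB τ := by
  ext ⟨a₁, b₁⟩ ⟨a₁', b₁'⟩
  simp only [ptrB, Matrix.of_apply, Matrix.reindex_apply, Matrix.submatrix_apply,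
    Matrix.kroneckerMap_apply, Fintype.sum_prod_type, Equiv.symm_symm,
    Equiv.prodProdProdComm_apply]
  rw [Finset.sum_mul_sum]

lemma ptrA_reindex_kron (σ : Matrix (A₁ × A₂) (A₁ × A₂) ℂ) (τ : Matrix (B₁ × B₂) (B₁ × B₂) ℂ) :
    ptrA ((Matrix.reindex (Equiv.prodProdProdComm A₁ B₁ A₂ B₂).symm
      (Equiv.prodProdProdComm A₁ B₁ A₂ B₂).symm) (σ ⊗ₖ τ))
    = ptrA σ ⊗ₖ ptrA τ := by
  ext ⟨a₂, b₂⟩ ⟨a₂', b₂'⟩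
  simp only [ptrA, Matrix.of_apply, Matrix.reindex_apply, Matrix.submatrix_apply,
    Matrix.kroneckerMap_apply, Fintype.sum_prod_type, Equiv.symm_symm,
    Equiv.prodProdProdComm_apply]
  rw [Finset.sum_mul_sum]

lemma relEnt_reindexed (M : Matrix ((A₁ × A₂) × (B₁ × B₂)) ((A₁ × A₂) × (B₁ × B₂)) ℂ)
    (X : Matrix ((A₁ × B₁) × (A₂ × B₂)) ((A₁ × B₁) × (A₂ × B₂)) ℂ) :
    relEnt M ((Matrix.reindex (Equiv.prodProdProdComm A₁ B₁ A₂ B₂)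
        (Equiv.prodProdProdComm A₁ B₁ A₂ B₂)) X)
      = relEnt ((Matrix.reindex (Equiv.prodProdProdComm A₁ B₁ A₂ B₂).symm
        (Equiv.prodProdProdComm A₁ B₁ A₂ B₂).symm) M) X := by
  conv_lhs => rw [← reindex_symm_reindex (Equiv.prodProdProdComm A₁ B₁ A₂ B₂) M]
  exact relEnt_reindex _ _ _

end Main
end TumProof


open TumProof Matrix in
/-- Additivity of the tumula information (Theorem 2(b)). -/
theorem tumula_additive {A₁ B₁ A₂ B₂ : Type*}
    [Fintype A₁] [DecidableEq A₁] [Nonempty A₁] [Fintype B₁] [DecidableEq B₁] [Nonempty B₁]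
    [Fintype A₂] [DecidableEq A₂] [Nonempty A₂] [Fintype B₂] [DecidableEq B₂] [Nonempty B₂]
    (ρ : MState (A₁ × B₁)) (ρ' : MState (A₂ × B₂)) :
    (⨅ (σ : MState (A₁ × A₂)) (τ : MState (B₁ × B₂)),
        relEnt (σ.mat ⊗ₖ τ.mat)
          (Matrix.reindex (Equiv.prodProdProdComm A₁ B₁ A₂ B₂)
            (Equiv.prodProdProdComm A₁ B₁ A₂ B₂) (ρ.mat ⊗ₖ ρ'.mat)))
      = Tum ρ.mat + Tum ρ'.mat := by
  apply le_antisymm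
  · -- LHS ≤ Tum + Tum
    have key : ∀ (p : MState A₁ × MState B₁) (q : MState A₂ × MState B₂),
        (⨅ (σ : MState (A₁ × A₂)) (τ : MState (B₁ × B₂)),
          relEnt (σ.mat ⊗ₖ τ.mat)
            (Matrix.reindex (Equiv.prodProdProdComm A₁ B₁ A₂ B₂)
              (Equiv.prodProdProdComm A₁ B₁ A₂ B₂) (ρ.mat ⊗ₖ ρ'.mat)))
        ≤ relEnt (p.1.mat ⊗ₖ p.2.mat) ρ.mat + relEnt (q.1.mat ⊗ₖ q.2.mat) ρ'.mat := by
      rintro ⟨σ₁, τ₁⟩ ⟨σ₂, τ₂⟩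
      refine le_trans (iInf₂_le
        (⟨σ₁.mat ⊗ₖ σ₂.mat, posSemidef_kron σ₁.posSemidef σ₂.posSemidef,
          by rw [Matrix.trace_kronecker, σ₁.trace_one, σ₂.trace_one, one_mul]⟩ : MState (A₁ × A₂))
        (⟨τ₁.mat ⊗ₖ τ₂.mat, posSemidef_kron τ₁.posSemidef τ₂.posSemidef,
          by rw [Matrix.trace_kronecker, τ₁.trace_one, τ₂.trace_one, one_mul]⟩ : MState (B₁ × B₂)))
        ?_
      show relEnt ((σ₁.mat ⊗ₖ σ₂.mat) ⊗ₖ (τ₁.mat ⊗ₖ τ₂.mat))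
          ((Matrix.reindex (Equiv.prodProdProdComm A₁ B₁ A₂ B₂)
            (Equiv.prodProdProdComm A₁ B₁ A₂ B₂)) (ρ.mat ⊗ₖ ρ'.mat)) ≤ _
      rw [relEnt_reindexed, reindex_symm_kron_kron]
      exact relEnt_kron_le (posSemidef_kron σ₁.posSemidef τ₁.posSemidef)
        (posSemidef_kron σ₂.posSemidef τ₂.posSemidef) ρ.posSemidef ρ'.posSemidef
        (by rw [Matrix.trace_kronecker, σ₁.trace_one, τ₁.trace_one, one_mul])
        (by rw [Matrix.trace_kronecker, σ₂.trace_one, τ₂.trace_one, one_mul])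
    have hT1 : Tum ρ.mat = ⨅ p : MState A₁ × MState B₁,
        relEnt (p.1.mat ⊗ₖ p.2.mat) ρ.mat := by
      rw [Tum]
      exact (iInf_prod (f := fun p : MState A₁ × MState B₁ =>
        relEnt (p.1.mat ⊗ₖ p.2.mat) ρ.mat)).symm
    have hT2 : Tum ρ'.mat = ⨅ q : MState A₂ × MState B₂,
        relEnt (q.1.mat ⊗ₖ q.2.mat) ρ'.mat := by
      rw [Tum]
      exact (iInf_prod (f := fun q : MState A₂ × MState B₂ =>
        relEnt (q.1.mat ⊗ₖ q.2.mat) ρ'.mat)).symm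
    rw [hT1, hT2]
    exact le_iInf_add_iInf
      (fun p => relEnt_nonneg (posSemidef_kron p.1.posSemidef p.2.posSemidef) ρ.posSemidef
        (by rw [Matrix.trace_kronecker, p.1.trace_one, p.2.trace_one, one_mul]) ρ.trace_one)
      (fun q => relEnt_nonneg (posSemidef_kron q.1.posSemidef q.2.posSemidef) ρ'.posSemidef
        (by rw [Matrix.trace_kronecker, q.1.trace_one, q.2.trace_one, one_mul]) ρ'.trace_one)
      key
  · -- Tum + Tum ≤ LHS
    refine le_iInf fun σ => le_iInf fun τ => ?_
    rw [relEnt_reindexed]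
    by_cases hker : (∀ x, (ρ.mat ⊗ₖ ρ'.mat) *ᵥ x = 0 →
        ((Matrix.reindex (Equiv.prodProdProdComm A₁ B₁ A₂ B₂).symm
          (Equiv.prodProdProdComm A₁ B₁ A₂ B₂).symm) (σ.mat ⊗ₖ τ.mat)) *ᵥ x = 0)
    · have hptrB := ptrB_reindex_kron σ.mat τ.mat
      have hptrA := ptrA_reindex_kron σ.mat τ.mat
      have hk1 : ∀ x, ρ.mat *ᵥ x = 0 → (ptrB σ.mat ⊗ₖ ptrB τ.mat) *ᵥ x = 0 := by
        intro x hx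
        rw [← hptrB]
        apply ker_ptrB
        intro b
        apply hker
        rw [kron_mulVec, hx, vkron_zero_left]
      have hk2 : ∀ x, ρ'.mat *ᵥ x = 0 → (ptrA σ.mat ⊗ₖ ptrA τ.mat) *ᵥ x = 0 := by
        intro x hx
        rw [← hptrA]
        apply ker_ptrA
        intro a
        apply hker
        rw [kron_mulVec, hx, vkron_zero_right]
      have hb1 : Tum ρ.mat ≤ relEnt (ptrB σ.mat ⊗ₖ ptrB τ.mat) ρ.mat := by
        rw [Tum]
        exact iInf₂_le
          (f := fun (a : MState A₁) (b : MState B₁) => relEnt (a.mat ⊗ₖ b.mat) ρ.mat)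
          (⟨ptrB σ.mat, ptrB_posSemidef σ.posSemidef,
            by rw [ptrB_trace, σ.trace_one]⟩ : MState A₁)
          (⟨ptrB τ.mat, ptrB_posSemidef τ.posSemidef,
            by rw [ptrB_trace, τ.trace_one]⟩ : MState B₁)
      have hb2 : Tum ρ'.mat ≤ relEnt (ptrA σ.mat ⊗ₖ ptrA τ.mat) ρ'.mat := by
        rw [Tum]
        exact iInf₂_le
          (f := fun (a : MState A₂) (b : MState B₂) => relEnt (a.mat ⊗ₖ b.mat) ρ'.mat)
          (⟨ptrA σ.mat, ptrA_posSemidef σ.posSemidef,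
            by rw [ptrA_trace, σ.trace_one]⟩ : MState A₂)
          (⟨ptrA τ.mat, ptrA_posSemidef τ.posSemidef,
            by rw [ptrA_trace, τ.trace_one]⟩ : MState B₂)
      refine le_trans (add_le_add hb1 hb2) ?_
      rw [relEnt_of_ker hker, relEnt_of_ker hk1, relEnt_of_ker hk2, ← EReal.coe_add,
        EReal.coe_le_coe_iff]
      have hself : ((((Matrix.reindex (Equiv.prodProdProdComm A₁ B₁ A₂ B₂).symm
            (Equiv.prodProdProdComm A₁ B₁ A₂ B₂).symm) (σ.mat ⊗ₖ τ.mat))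
            * mlog ((Matrix.reindex (Equiv.prodProdProdComm A₁ B₁ A₂ B₂).symm
            (Equiv.prodProdProdComm A₁ B₁ A₂ B₂).symm) (σ.mat ⊗ₖ τ.mat))).trace).re
          = ((σ.mat * mlog σ.mat).trace).re + ((τ.mat * mlog τ.mat).trace).re := by
        rw [mlog_reindex, ← reindex_mul, reindex_trace,
          trace_mul_mlog_kron σ.posSemidef.1 τ.posSemidef.1 _ (fun x hx => hx),
          ptrB_kron, ptrA_kron, σ.trace_one, τ.trace_one, one_smul, one_smul, Complex.add_re]
      have hcross : ((((Matrix.reindex (Equiv.prodProdProdComm A₁ B₁ A₂ B₂).symm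
            (Equiv.prodProdProdComm A₁ B₁ A₂ B₂).symm) (σ.mat ⊗ₖ τ.mat))
            * mlog (ρ.mat ⊗ₖ ρ'.mat)).trace).re
          = (((ptrB σ.mat ⊗ₖ ptrB τ.mat) * mlog ρ.mat).trace).re
            + (((ptrA σ.mat ⊗ₖ ptrA τ.mat) * mlog ρ'.mat).trace).re := by
        rw [trace_mul_mlog_kron ρ.posSemidef.1 ρ'.posSemidef.1 _ hker, hptrB, hptrA,
          Complex.add_re]
      have hm1 : (((ptrB σ.mat ⊗ₖ ptrB τ.mat) * mlog (ptrB σ.mat ⊗ₖ ptrB τ.mat)).trace).re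
          = ((ptrB σ.mat * mlog (ptrB σ.mat)).trace).re
            + ((ptrB τ.mat * mlog (ptrB τ.mat)).trace).re := by
        rw [trace_mul_mlog_kron (ptrB_posSemidef σ.posSemidef).1
            (ptrB_posSemidef τ.posSemidef).1 _ (fun x hx => hx),
          ptrB_kron, ptrA_kron]
        rw [show (ptrB σ.mat).trace = 1 from by rw [ptrB_trace, σ.trace_one],
          show (ptrB τ.mat).trace = 1 from by rw [ptrB_trace, τ.trace_one],
          one_smul, one_smul, Complex.add_re]
      have hm2 : (((ptrA σ.mat ⊗ₖ ptrA τ.mat) * mlog (ptrA σ.mat ⊗ₖ ptrA τ.mat)).trace).re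
          = ((ptrA σ.mat * mlog (ptrA σ.mat)).trace).re
            + ((ptrA τ.mat * mlog (ptrA τ.mat)).trace).re := by
        rw [trace_mul_mlog_kron (ptrA_posSemidef σ.posSemidef).1
            (ptrA_posSemidef τ.posSemidef).1 _ (fun x hx => hx),
          ptrB_kron, ptrA_kron]
        rw [show (ptrA σ.mat).trace = 1 from by rw [ptrA_trace, σ.trace_one],
          show (ptrA τ.mat).trace = 1 from by rw [ptrA_trace, τ.trace_one],
          one_smul, one_smul, Complex.add_re]
      have hsub1 := subadd σ.posSemidef σ.trace_one
      have hsub2 := subadd τ.posSemidef τ.trace_one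
      rw [hself, hcross, hm1, hm2]
      linarith
    · rw [relEnt_of_not_ker hker]
      exact le_top

end
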